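/- Let {β^m}_{m ∈ [M]} ⊂ ℝ^d, let δ^m = β^m − β⋆ for some β⋆ ∈ ℝ^d with ‖δ^m‖₀ ≤ s. Given matrices X^m ∈ ℝ^{n×d} and Y^m = X^m β^m, the multitask Dantzig selector—minimizing Σ_m ‖v^m‖₁ over (v⋆, {v^m}) subject to X^{m⊤}(X^m(v⋆ + v^m) − Y^m) = 0 for all m—recovers β^m = v̂⋆ + v̂^m for all m if and only if for all choices u^m ∈ null(X^m) (m ∈ [M]), the quantity Σ_{m=1}^M ‖δ^m + u^m − median({δ^ℓ + u^ℓ}_{ℓ∈[M]})‖₁ is uniquely minimized at u^m = 0 for all m. -/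

import Mathlib

open Matrix

/-- The median of a list of reals: the middle element of the sorted list
(the average of the two middle elements when the length is even). -/
noncomputable def listMedian (l : List ℝ) : ℝ :=
  let s := l.mergeSort (· ≤ ·)
  if l.length % 2 = 1 then s.getD (l.length / 2) 0
  else (s.getD (l.length / 2 - 1) 0 + s.getD (l.length / 2) 0) / 2

/-- The sample median of finitely many reals. -/
noncomputable def sampleMedian {ι : Type*} [Fintype ι] (f : ι → ℝ) : ℝ :=
  listMedian (Finset.univ.val.toList.map f)

lemma monoGet (s : List ℝ)
    (hs : ∀ (i j : ℕ) (_ : i < s.length) (_ : j < s.length), i < j → s[i] ≤ s[j])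
    (i j : ℕ) (hi : i < s.length) (hj : j < s.length) (hij : i ≤ j) : s[i] ≤ s[j] := by
  rcases eq_or_lt_of_le hij with h | h
  · subst h; exact le_refl _
  · exact hs i j hi hj h

lemma countP_lt_le_of_sorted (s : List ℝ)
    (hs : ∀ (i j : ℕ) (_ : i < s.length) (_ : j < s.length), i < j → s[i] ≤ s[j])
    (j : ℕ) (hj : j < s.length) (a : ℝ) (ha : a ≤ s[j]) :
    s.countP (fun x => decide (x < a)) ≤ j := by
  conv_lhs => rw [← List.take_append_drop j s]
  rw [List.countP_append]
  have h1 : (s.drop j).countP (fun x => decide (x < a)) = 0 := by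
    rw [List.countP_eq_zero]
    intro x hx
    rw [List.mem_iff_getElem] at hx
    obtain ⟨k, hk, rfl⟩ := hx
    have hjk : j + k < s.length := by
      have := hk; simp only [List.length_drop] at this; omega
    have h2 : s[j] ≤ (s.drop j)[k] := by
      rw [List.getElem_drop]
      exact monoGet s hs j (j + k) hj hjk (by omega)
    simp only [decide_eq_true_eq, not_lt]
    exact le_trans ha h2
  rw [h1, Nat.add_zero]
  calc (s.take j).countP (fun x => decide (x < a)) ≤ (s.take j).length :=
        List.countP_le_length
    _ ≤ j := by simp [List.length_take]

lemma countP_gt_le_of_sorted (s : List ℝ)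
    (hs : ∀ (i j : ℕ) (_ : i < s.length) (_ : j < s.length), i < j → s[i] ≤ s[j])
    (j : ℕ) (hj : j < s.length) (a : ℝ) (ha : s[j] ≤ a) :
    s.countP (fun x => decide (a < x)) ≤ s.length - (j + 1) := by
  conv_lhs => rw [← List.take_append_drop (j + 1) s]
  rw [List.countP_append]
  have h1 : (s.take (j + 1)).countP (fun x => decide (a < x)) = 0 := by
    rw [List.countP_eq_zero]
    intro x hx
    rw [List.mem_iff_getElem] at hx
    obtain ⟨k, hk, rfl⟩ := hx
    have hk' : k < s.length ∧ k ≤ j := by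
      have := hk; simp only [List.length_take] at this; omega
    have h2 : (s.take (j + 1))[k] ≤ s[j] := by
      rw [List.getElem_take]
      exact monoGet s hs k j hk'.1 hj hk'.2
    simp only [decide_eq_true_eq, not_lt]
    exact le_trans h2 ha
  rw [h1, Nat.zero_add]
  calc (s.drop (j + 1)).countP (fun x => decide (a < x)) ≤ (s.drop (j + 1)).length :=
        List.countP_le_length
    _ ≤ s.length - (j + 1) := by simp [List.length_drop]

open Classical in
lemma filter_card_eq_countP {M : ℕ} (f : Fin M → ℝ) (p : ℝ → Prop) :
    (Finset.univ.filter fun i => p (f i)).card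
      = (Finset.univ.val.toList.map f).countP fun x => decide (p x) := by
  have h1 : (Finset.univ.filter fun i => p (f i)).card
      = Multiset.countP (fun i => p (f i)) (Finset.univ.val (α := Fin M)) := by
    rw [Multiset.countP_eq_card_filter]
    rfl
  have h2 : Multiset.countP (fun i => p (f i)) (Finset.univ.val (α := Fin M))
      = Multiset.countP p (Multiset.map f Finset.univ.val) := by
    rw [Multiset.countP_map, Multiset.countP_eq_card_filter]
  have h3 : Multiset.map f (Finset.univ.val (α := Fin M))
      = ↑((Finset.univ.val (α := Fin M)).toList.map f) := by
    conv_lhs => rw [← Multiset.coe_toList (Finset.univ.val (α := Fin M))]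
    rfl
  rw [h1, h2, h3, Multiset.coe_countP]

open Classical in
lemma sampleMedian_counts {M : ℕ} (hM : 0 < M) (f : Fin M → ℝ) :
    2 * (Finset.univ.filter fun i => f i < sampleMedian f).card ≤ M ∧
    2 * (Finset.univ.filter fun i => sampleMedian f < f i).card ≤ M := by
  set l : List ℝ := Finset.univ.val.toList.map f with hl
  have hlen : l.length = M := by
    rw [hl, List.length_map, Multiset.length_toList]
    simp
  set s : List ℝ := l.mergeSort (· ≤ ·) with hsdef
  have hslen : s.length = M := by rw [hsdef, List.length_mergeSort, hlen]
  have hsort : ∀ (i j : ℕ) (_ : i < s.length) (_ : j < s.length), i < j → s[i] ≤ s[j] := by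
    have hp := List.pairwise_mergeSort (le := fun a b : ℝ => decide (a ≤ b))
      (fun a b c hab hbc => by
        simp only [decide_eq_true_eq] at *; exact le_trans hab hbc)
      (fun a b => by
        simp only [Bool.or_eq_true, decide_eq_true_eq]; exact le_total a b) l
    rw [List.pairwise_iff_getElem] at hp
    intro i j hi hj hij
    have := hp i j hi hj hij
    simpa using this
  have hperm : s.Perm l := List.mergeSort_perm l _
  have hcount : ∀ p : ℝ → Prop,
      (Finset.univ.filter fun i => p (f i)).card = s.countP fun x => decide (p x) := by
    intro p
    rw [filter_card_eq_countP f p, ← hl, hperm.countP_eq]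
  have hunfold : sampleMedian f = if M % 2 = 1 then s.getD (M / 2) 0
      else (s.getD (M / 2 - 1) 0 + s.getD (M / 2) 0) / 2 := by
    have : sampleMedian f = if l.length % 2 = 1 then s.getD (l.length / 2) 0
        else (s.getD (l.length / 2 - 1) 0 + s.getD (l.length / 2) 0) / 2 := rfl
    rw [this, hlen]
  have hmed : ∃ (j1 j2 : ℕ) (h1 : j1 < s.length) (h2 : j2 < s.length),
      s[j1] ≤ sampleMedian f ∧ sampleMedian f ≤ s[j2] ∧
      2 * j2 ≤ M ∧ M ≤ 2 * (j1 + 1) := by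
    by_cases hpar : M % 2 = 1
    · have h2 : M / 2 < s.length := by omega
      refine ⟨M / 2, M / 2, h2, h2, ?_, ?_, by omega, by omega⟩ <;>
        rw [hunfold, if_pos hpar, List.getD_eq_getElem _ _ h2]
    · have hM2 : 2 ≤ M := by omega
      have h1 : M / 2 - 1 < s.length := by omega
      have h2 : M / 2 < s.length := by omega
      have hle : s[M / 2 - 1] ≤ s[M / 2] := monoGet s hsort _ _ h1 h2 (by omega)
      refine ⟨M / 2 - 1, M / 2, h1, h2, ?_, ?_, by omega, by omega⟩ <;>
      · rw [hunfold, if_neg hpar, List.getD_eq_getElem _ _ h1, List.getD_eq_getElem _ _ h2]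
        linarith
  obtain ⟨j1, j2, hj1, hj2, hm1, hm2, hj2M, hj1M⟩ := hmed
  constructor
  · rw [hcount (· < sampleMedian f)]
    have := countP_lt_le_of_sorted s hsort j2 hj2 _ hm2
    omega
  · rw [hcount (sampleMedian f < ·)]
    have := countP_gt_le_of_sorted s hsort j1 hj1 _ hm1
    omega

open Classical in
lemma sampleMedian_min {M : ℕ} (hM : 0 < M) (f : Fin M → ℝ) (c : ℝ) :
    ∑ i, |f i - sampleMedian f| ≤ ∑ i, |f i - c| := by
  set m := sampleMedian f with hm
  obtain ⟨hlt, hgt⟩ := sampleMedian_counts hM f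
  have key : (0 : ℝ) ≤ ∑ i, (|f i - c| - |f i - m|) := by
    rcases le_total m c with hmc | hcm
    · set p : Fin M → Prop := fun i => m < f i with hp
      have hsplit := Finset.sum_filter_add_sum_filter_not Finset.univ p
        (fun i => |f i - c| - |f i - m|)
      have hA : ∀ i ∈ Finset.univ.filter fun i => ¬ p i,
          (c - m) ≤ |f i - c| - |f i - m| := by
        intro i hi
        simp only [hp, Finset.mem_filter, not_lt] at hi
        have hfi : f i ≤ m := hi.2
        rw [abs_of_nonpos (by linarith), abs_of_nonpos (by linarith)]
        ring_nf
        linarith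
      have hB : ∀ i ∈ Finset.univ.filter p,
          -(c - m) ≤ |f i - c| - |f i - m| := by
        intro i _
        have := abs_sub_abs_le_abs_sub (f i - m) (f i - c)
        have h2 : |f i - m - (f i - c)| = c - m := by
          rw [show f i - m - (f i - c) = c - m by ring, abs_of_nonneg (by linarith)]
        linarith
      have hAsum : ((Finset.univ.filter fun i => ¬ p i).card : ℝ) * (c - m)
          ≤ ∑ i ∈ Finset.univ.filter fun i => ¬ p i, (|f i - c| - |f i - m|) := by
        calc ((Finset.univ.filter fun i => ¬ p i).card : ℝ) * (c - m)
            = ∑ _i ∈ Finset.univ.filter fun i => ¬ p i, (c - m) := by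
              rw [Finset.sum_const, nsmul_eq_mul]
          _ ≤ _ := Finset.sum_le_sum hA
      have hBsum : ((Finset.univ.filter p).card : ℝ) * (-(c - m))
          ≤ ∑ i ∈ Finset.univ.filter p, (|f i - c| - |f i - m|) := by
        calc ((Finset.univ.filter p).card : ℝ) * (-(c - m))
            = ∑ _i ∈ Finset.univ.filter p, (-(c - m)) := by
              rw [Finset.sum_const, nsmul_eq_mul]
          _ ≤ _ := Finset.sum_le_sum hB
      have hcard := Finset.card_filter_add_card_filter_not
        (s := (Finset.univ : Finset (Fin M))) p
      rw [Finset.card_univ, Fintype.card_fin] at hcard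
      have hgt' : 2 * ((Finset.univ.filter p).card : ℝ) ≤ M := by
        exact_mod_cast hgt
      have hcard' : ((Finset.univ.filter p).card : ℝ)
          + ((Finset.univ.filter fun i => ¬ p i).card : ℝ) = M := by
        exact_mod_cast hcard
      rw [← hsplit]
      nlinarith [hBsum, hAsum]
    · set p : Fin M → Prop := fun i => f i < m with hp
      have hsplit := Finset.sum_filter_add_sum_filter_not Finset.univ p
        (fun i => |f i - c| - |f i - m|)
      have hA : ∀ i ∈ Finset.univ.filter fun i => ¬ p i,
          (m - c) ≤ |f i - c| - |f i - m| := by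
        intro i hi
        simp only [hp, Finset.mem_filter, not_lt] at hi
        have hfi : m ≤ f i := hi.2
        rw [abs_of_nonneg (by linarith), abs_of_nonneg (by linarith)]
        linarith
      have hB : ∀ i ∈ Finset.univ.filter p,
          -(m - c) ≤ |f i - c| - |f i - m| := by
        intro i _
        have := abs_sub_abs_le_abs_sub (f i - m) (f i - c)
        have h2 : |f i - m - (f i - c)| = m - c := by
          rw [show f i - m - (f i - c) = -(m - c) by ring, abs_neg,
            abs_of_nonneg (by linarith)]
        linarith
      have hAsum : ((Finset.univ.filter fun i => ¬ p i).card : ℝ) * (m - c)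
          ≤ ∑ i ∈ Finset.univ.filter fun i => ¬ p i, (|f i - c| - |f i - m|) := by
        calc ((Finset.univ.filter fun i => ¬ p i).card : ℝ) * (m - c)
            = ∑ _i ∈ Finset.univ.filter fun i => ¬ p i, (m - c) := by
              rw [Finset.sum_const, nsmul_eq_mul]
          _ ≤ _ := Finset.sum_le_sum hA
      have hBsum : ((Finset.univ.filter p).card : ℝ) * (-(m - c))
          ≤ ∑ i ∈ Finset.univ.filter p, (|f i - c| - |f i - m|) := by
        calc ((Finset.univ.filter p).card : ℝ) * (-(m - c))
            = ∑ _i ∈ Finset.univ.filter p, (-(m - c)) := by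
              rw [Finset.sum_const, nsmul_eq_mul]
          _ ≤ _ := Finset.sum_le_sum hB
      have hcard := Finset.card_filter_add_card_filter_not
        (s := (Finset.univ : Finset (Fin M))) p
      rw [Finset.card_univ, Fintype.card_fin] at hcard
      have hlt' : 2 * ((Finset.univ.filter p).card : ℝ) ≤ M := by
        exact_mod_cast hlt
      have hcard' : ((Finset.univ.filter p).card : ℝ)
          + ((Finset.univ.filter fun i => ¬ p i).card : ℝ) = M := by
        exact_mod_cast hcard
      rw [← hsplit]
      nlinarith [hBsum, hAsum]
  rw [Finset.sum_sub_distrib] at key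
  linarith

lemma constraint_iff {n d : ℕ} (A : Matrix (Fin n) (Fin d) ℝ) (w : Fin d → ℝ) :
    Aᵀ.mulVec (A.mulVec w) = 0 ↔ A.mulVec w = 0 := by
  constructor
  · intro h
    rw [← dotProduct_self_eq_zero (v := A.mulVec w)]
    have h2 : dotProduct w (Aᵀ.mulVec (A.mulVec w)) = 0 := by rw [h]; simp
    rwa [Matrix.dotProduct_mulVec, Matrix.vecMul_transpose] at h2
  · intro h
    rw [h, Matrix.mulVec_zero]

lemma constraint_iff' {n d M : ℕ} (X : Fin M → Matrix (Fin n) (Fin d) ℝ)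
    (β : Fin M → Fin d → ℝ) (vs : Fin d → ℝ) (v : Fin M → Fin d → ℝ) :
    (∀ m, (X m)ᵀ.mulVec ((X m).mulVec (vs + v m) - (X m).mulVec (β m)) = 0)
      ↔ ∀ m, (X m).mulVec (vs + v m - β m) = 0 := by
  have h : ∀ m, (X m).mulVec (vs + v m) - (X m).mulVec (β m)
      = (X m).mulVec (vs + v m - β m) := fun m => (Matrix.mulVec_sub _ _ _).symm
  constructor
  · intro hc m; have := hc m; rw [h m] at this; exact (constraint_iff _ _).mp this
  · intro hc m; rw [h m]; exact (constraint_iff _ _).mpr (hc m)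

lemma key_lb {M d : ℕ} (hM : 0 < M) (δ : Fin M → Fin d → ℝ) (c : Fin d → ℝ) :
    (∑ m, ∑ k, |δ m k - sampleMedian fun ℓ => δ ℓ k|) ≤ ∑ m, ∑ k, |δ m k - c k| := by
  calc (∑ m, ∑ k, |δ m k - sampleMedian fun ℓ => δ ℓ k|)
      = ∑ k, ∑ m, |δ m k - sampleMedian fun ℓ => δ ℓ k| := Finset.sum_comm
    _ ≤ ∑ k, ∑ m, |δ m k - c k| :=
        Finset.sum_le_sum fun k _ => sampleMedian_min hM (fun ℓ => δ ℓ k) (c k)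
    _ = ∑ m, ∑ k, |δ m k - c k| := Finset.sum_comm

lemma exists_min_l1 {M n d : ℕ} (X : Fin M → Matrix (Fin n) (Fin d) ℝ)
    (β : Fin M → Fin d → ℝ) :
    ∃ (vs : Fin d → ℝ) (v : Fin M → Fin d → ℝ),
      (∀ m, (X m).mulVec (vs + v m - β m) = 0) ∧
      ∀ (ws : Fin d → ℝ) (w : Fin M → Fin d → ℝ),
        (∀ m, (X m).mulVec (ws + w m - β m) = 0) →
        (∑ m, ∑ k, |v m k|) ≤ ∑ m, ∑ k, |w m k| := by
  classical
  set f : (Fin M → Fin d → ℝ) → ℝ := fun v => ∑ m, ∑ k, |v m k| with hf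
  have hfc : Continuous f := by
    apply continuous_finset_sum
    intro m _
    apply continuous_finset_sum
    intro k _
    exact ((continuous_apply k).comp (continuous_apply m)).abs
  have hfnonneg : ∀ v, 0 ≤ f v := fun v =>
    Finset.sum_nonneg fun m _ => Finset.sum_nonneg fun k _ => abs_nonneg _
  have hfcoord : ∀ (v : Fin M → Fin d → ℝ) m k, |v m k| ≤ f v := by
    intro v m k
    show |v m k| ≤ ∑ m, ∑ k, |v m k|
    calc |v m k| ≤ ∑ k, |v m k| :=
          Finset.single_le_sum (f := fun k => |v m k|)
            (fun k _ => abs_nonneg _) (Finset.mem_univ k)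
      _ ≤ ∑ m, ∑ k, |v m k| := Finset.single_le_sum
          (f := fun m => ∑ k, |v m k|)
          (fun m _ => Finset.sum_nonneg fun k _ => abs_nonneg _) (Finset.mem_univ m)
  let S₀ : Submodule ℝ (Fin M → Fin d → ℝ) :=
    { carrier := {q | ∃ vs, ∀ m, (X m).mulVec (vs + q m) = 0}
      add_mem' := by
        rintro q q' ⟨a, ha⟩ ⟨b, hb⟩
        refine ⟨a + b, fun m => ?_⟩
        have : (a + b) + (q + q') m = (a + q m) + (b + q' m) := by
          simp only [Pi.add_apply]; abel
        rw [this, Matrix.mulVec_add, ha m, hb m, add_zero]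
      zero_mem' := ⟨0, fun m => by simp⟩
      smul_mem' := by
        rintro t q ⟨a, ha⟩
        refine ⟨t • a, fun m => ?_⟩
        have : (t • a) + (t • q) m = t • (a + q m) := by
          simp only [Pi.smul_apply]; module
        rw [this, Matrix.mulVec_smul, ha m, smul_zero] }
  set S : Set (Fin M → Fin d → ℝ) :=
    {v | ∃ vs, ∀ m, (X m).mulVec (vs + v m - β m) = 0} with hS
  have hSpre : S = (fun v => v - β) ⁻¹' (S₀ : Set (Fin M → Fin d → ℝ)) := by
    ext v
    simp only [hS, Set.mem_setOf_eq, Set.mem_preimage, SetLike.mem_coe]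
    constructor
    · rintro ⟨vs, hvs⟩
      exact ⟨vs, fun m => by
        have := hvs m
        rwa [show vs + v m - β m = vs + (v - β) m by simp only [Pi.sub_apply]; abel]
          at this⟩
    · rintro ⟨vs, hvs⟩
      exact ⟨vs, fun m => by
        have := hvs m
        rwa [show vs + (v - β) m = vs + v m - β m by simp only [Pi.sub_apply]; abel]
          at this⟩
  have hSclosed : IsClosed S := by
    rw [hSpre]
    exact (Submodule.closed_of_finiteDimensional S₀).preimage
      (continuous_id.sub continuous_const)
  have hβS : β ∈ S := ⟨0, fun m => by simp⟩
  set r : ℝ := f β with hr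
  have hr0 : 0 ≤ r := hfnonneg β
  set K : Set (Fin M → Fin d → ℝ) := S ∩ {v | f v ≤ r} with hK
  have hKclosed : IsClosed K :=
    hSclosed.inter (isClosed_le hfc continuous_const)
  have hKbdd : Bornology.IsBounded K := by
    apply (Metric.isBounded_closedBall (x := (0 : Fin M → Fin d → ℝ)) (r := r)).subset
    rintro v ⟨_, hv⟩
    rw [Metric.mem_closedBall, dist_zero_right]
    rw [pi_norm_le_iff_of_nonneg hr0]
    intro m
    rw [pi_norm_le_iff_of_nonneg hr0]
    intro k
    rw [Real.norm_eq_abs]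
    exact le_trans (hfcoord v m k) hv
  have hKcompact : IsCompact K := Metric.isCompact_of_isClosed_isBounded hKclosed hKbdd
  have hKne : K.Nonempty := ⟨β, hβS, le_refl r⟩
  obtain ⟨v₀, hv₀K, hmin⟩ := hKcompact.exists_isMinOn hKne hfc.continuousOn
  obtain ⟨hv₀S, hv₀r⟩ := hv₀K
  obtain ⟨vs₀, hfeas⟩ := hv₀S
  refine ⟨vs₀, v₀, hfeas, ?_⟩
  intro ws w hw
  have hwS : w ∈ S := ⟨ws, hw⟩
  by_cases hwr : f w ≤ r
  · exact isMinOn_iff.mp hmin w ⟨hwS, hwr⟩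
  · have : f v₀ ≤ r := hv₀r
    push_neg at hwr
    linarith [this, hwr]


open Classical in
/-- The multitask Dantzig selector (minimizing `Σ_m ‖v^m‖₁` subject to
`X^{m⊤}(X^m(v⋆ + v^m) - Y^m) = 0` with `Y^m = X^m β^m`) recovers
`β^m = v̂⋆ + v̂^m` for all `m` if and only if, for all `u^m ∈ null(X^m)`,
`Σ_m ‖δ^m + u^m - median({δ^ℓ + u^ℓ}_ℓ)‖₁` (coordinate-wise median,
`δ^m = β^m - β⋆`) is uniquely minimized at `u = 0`. -/
theorem multitask_dantzig_recovery
    {M n d : ℕ} (hM : 0 < M)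
    (β : Fin M → Fin d → ℝ) (βstar : Fin d → ℝ) (s : ℕ)
    (hsparse : ∀ m,
      (Finset.univ.filter fun k => β m k - βstar k ≠ 0).card ≤ s)
    (X : Fin M → Matrix (Fin n) (Fin d) ℝ) :
    ((∀ (vs : Fin d → ℝ) (v : Fin M → Fin d → ℝ),
        (∀ m, (X m)ᵀ.mulVec ((X m).mulVec (vs + v m) - (X m).mulVec (β m)) = 0) →
        (∀ (ws : Fin d → ℝ) (w : Fin M → Fin d → ℝ),
          (∀ m, (X m)ᵀ.mulVec ((X m).mulVec (ws + w m) - (X m).mulVec (β m)) = 0) →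
          (∑ m, ∑ k, |v m k|) ≤ ∑ m, ∑ k, |w m k|) →
        ∀ m, vs + v m = β m)
      ↔
      (∀ u : Fin M → Fin d → ℝ, (∀ m, (X m).mulVec (u m) = 0) → u ≠ 0 →
        (∑ m, ∑ k,
            |β m k - βstar k - sampleMedian fun ℓ => β ℓ k - βstar k|)
          < ∑ m, ∑ k,
              |β m k - βstar k + u m k
                - sampleMedian fun ℓ => β ℓ k - βstar k + u ℓ k|)) := by
  constructor
  · intro hLHS u hu hune
    by_contra hcon
    push_neg at hcon
    obtain ⟨vs₀, v₀, hfeas₀, hmin₀⟩ := exists_min_l1 X β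
    have hrec := hLHS vs₀ v₀ ((constraint_iff' X β vs₀ v₀).mpr hfeas₀)
      (fun ws w hw => hmin₀ ws w ((constraint_iff' X β ws w).mp hw))
    have hv₀eq : ∀ m k, v₀ m k = β m k - vs₀ k := by
      intro m k
      have h := congrFun (hrec m) k
      simp only [Pi.add_apply] at h
      linarith
    have hF0le : (∑ m, ∑ k, |β m k - βstar k - sampleMedian fun ℓ => β ℓ k - βstar k|)
        ≤ ∑ m, ∑ k, |v₀ m k| := by
      calc _ ≤ ∑ m, ∑ k, |β m k - βstar k - (vs₀ k - βstar k)| :=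
            key_lb hM (fun m k => β m k - βstar k) (fun k => vs₀ k - βstar k)
        _ = ∑ m, ∑ k, |v₀ m k| := by
            apply Finset.sum_congr rfl; intro m _
            apply Finset.sum_congr rfl; intro k _
            rw [hv₀eq m k]; congr 1; ring
    set vsu : Fin d → ℝ :=
      fun k => βstar k + sampleMedian fun ℓ => β ℓ k - βstar k + u ℓ k with hvsu
    set vu : Fin M → Fin d → ℝ := fun m => β m + u m - vsu with hvu
    have hvufeas : ∀ m, (X m).mulVec (vsu + vu m - β m) = 0 := by
      intro m
      have h : vsu + vu m - β m = u m := by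
        funext k; simp only [hvu, Pi.add_apply, Pi.sub_apply]; ring
      rw [h]; exact hu m
    have hvuval : (∑ m, ∑ k, |vu m k|) = ∑ m, ∑ k,
        |β m k - βstar k + u m k
          - sampleMedian fun ℓ => β ℓ k - βstar k + u ℓ k| := by
      apply Finset.sum_congr rfl; intro m _
      apply Finset.sum_congr rfl; intro k _
      simp only [hvu, hvsu, Pi.add_apply, Pi.sub_apply]
      congr 1; ring
    have hvumin : ∀ (ws : Fin d → ℝ) (w : Fin M → Fin d → ℝ),
        (∀ m, (X m)ᵀ.mulVec ((X m).mulVec (ws + w m) - (X m).mulVec (β m)) = 0) →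
        (∑ m, ∑ k, |vu m k|) ≤ ∑ m, ∑ k, |w m k| := by
      intro ws w hw
      have h1 := hmin₀ ws w ((constraint_iff' X β ws w).mp hw)
      calc (∑ m, ∑ k, |vu m k|) = _ := hvuval
        _ ≤ _ := hcon
        _ ≤ ∑ m, ∑ k, |v₀ m k| := hF0le
        _ ≤ _ := h1
    have hreq := hLHS vsu vu ((constraint_iff' X β vsu vu).mpr hvufeas) hvumin
    apply hune
    funext m k
    have h2 := congrFun (hreq m) k
    simp only [hvu, hvsu, Pi.add_apply, Pi.sub_apply] at h2
    simp only [Pi.zero_apply]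
    linarith
  · intro hRHS vs v hfeas hmin
    have hu : ∀ m, (X m).mulVec (vs + v m - β m) = 0 :=
      (constraint_iff' X β vs v).mp hfeas
    by_contra hcon
    push_neg at hcon
    obtain ⟨m₀, hm₀⟩ := hcon
    set u : Fin M → Fin d → ℝ := fun m => vs + v m - β m with hudef
    have hu0 : ∀ m, (X m).mulVec (u m) = 0 := fun m => hu m
    have hune : u ≠ 0 := by
      intro h0
      apply hm₀
      funext k
      have h2 := congrFun (congrFun h0 m₀) k
      simp only [hudef, Pi.add_apply, Pi.sub_apply, Pi.zero_apply] at h2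
      simp only [Pi.add_apply]
      linarith
    have hstrict := hRHS u hu0 hune
    have hGle : (∑ m, ∑ k,
        |β m k - βstar k + u m k
          - sampleMedian fun ℓ => β ℓ k - βstar k + u ℓ k|) ≤ ∑ m, ∑ k, |v m k| := by
      calc _ ≤ ∑ m, ∑ k, |β m k - βstar k + u m k - (vs k - βstar k)| :=
            key_lb hM (fun m k => β m k - βstar k + u m k) (fun k => vs k - βstar k)
        _ = ∑ m, ∑ k, |v m k| := by
            apply Finset.sum_congr rfl; intro m _
            apply Finset.sum_congr rfl; intro k _
            simp only [hudef, Pi.add_apply, Pi.sub_apply]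
            congr 1; ring
    set ws0 : Fin d → ℝ :=
      fun k => βstar k + sampleMedian fun ℓ => β ℓ k - βstar k with hws0
    set w0 : Fin M → Fin d → ℝ := fun m => β m - ws0 with hw0
    have hw0feas : ∀ m,
        (X m)ᵀ.mulVec ((X m).mulVec (ws0 + w0 m) - (X m).mulVec (β m)) = 0 := by
      intro m
      have h : ws0 + w0 m = β m := by
        funext k; simp only [hw0, Pi.add_apply, Pi.sub_apply]; ring
      rw [h, sub_self, Matrix.mulVec_zero]
    have hw0val : (∑ m, ∑ k, |w0 m k|) = ∑ m, ∑ k,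
        |β m k - βstar k - sampleMedian fun ℓ => β ℓ k - βstar k| := by
      apply Finset.sum_congr rfl; intro m _
      apply Finset.sum_congr rfl; intro k _
      simp only [hw0, hws0, Pi.sub_apply]
      congr 1; ring
    have hfv := hmin ws0 w0 hw0feas
    rw [hw0val] at hfv
    linarith
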